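/- Let n ≥ 5 be odd and set c := cos(π/n)/(1 + cos(π/n)). Suppose v_0, v_1, …, v_n are vectors in a real inner product space such that ⟨v_0, v_0⟩ = 1, ⟨v_i, v_i⟩ = ⟨v_0, v_i⟩ = c for all i ∈ {1,…,n}, and ⟨v_i, v_j⟩ = 0 whenever i − j ≡ ±1 (mod n). Define the (1+n)×(1+n) matrix Z by Z = (1/c)·Gram(−v_0, v_1, …, v_n), i.e. Z_{00} = 1/c, Z_{0i} = Z_{i0} = −(1/c)⟨v_0, v_i⟩, and Z_{ij} = (1/c)⟨v_i, v_j⟩ for i, j ∈ {1,…,n}. Then Z is positive semidefinite, Z_{00} = (1 + cos(π/n))/cos(π/n), Z_{ii} = 1 = −(2 Z_{0i} + 1) for all i ∈ {1,…,n}, and Z_{ij} = 0 for all distinct i, j ∈ {1,…,n} with i − j ≡ ±1 (mod n); hence Z is dual feasible for the Lovász theta SDP of C̄_n with objective value (1 + cos(π/n))/cos(π/n). -/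

import Mathlib

open scoped RealInnerProductSpace

/-- Let `n ≥ 5` be odd and `c = cos(π/n)/(1 + cos(π/n))`.  If `v_0, v_1, …, v_n` are vectors in
a real inner product space with `⟪v_0, v_0⟫ = 1`, `⟪v_i, v_i⟫ = ⟪v_0, v_i⟫ = c` for
`i ∈ {1, …, n}`, and `⟪v_i, v_j⟫ = 0` whenever `i - j ≡ ±1 (mod n)` (adjacency in the `n`-cycle
on vertices `1, …, n`, with cyclic successor `i % n + 1`), then the matrix
`Z = (1/c) · Gram(-v_0, v_1, …, v_n)` is positive semidefinite, has
`Z 0 0 = (1 + cos(π/n))/cos(π/n)`, satisfies `Z i i = 1 = -(2 Z 0 i + 1)` for `i ∈ {1, …, n}`,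
and `Z i j = 0` for distinct `i, j ∈ {1, …, n}` with `i - j ≡ ±1 (mod n)`; i.e. `Z` is a dual
feasible solution of the Lovász theta SDP of `C̄_n` with objective value
`(1 + cos(π/n))/cos(π/n)`. -/
theorem antiHole_dual_feasible {E : Type*} [NormedAddCommGroup E] [InnerProductSpace ℝ E]
    (n : ℕ) (hodd : Odd n) (hn : 5 ≤ n)
    (c : ℝ) (hc : c = Real.cos (Real.pi / n) / (1 + Real.cos (Real.pi / n)))
    (v : Fin (n + 1) → E)
    (hv0 : ⟪v 0, v 0⟫ = 1)
    (hvii : ∀ i : Fin (n + 1), i.val ≠ 0 → ⟪v i, v i⟫ = c)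
    (hv0i : ∀ i : Fin (n + 1), i.val ≠ 0 → ⟪v 0, v i⟫ = c)
    (horth : ∀ i j : Fin (n + 1), i.val ≠ 0 → j.val ≠ 0 →
      (i.val % n + 1 = j.val ∨ j.val % n + 1 = i.val) → ⟪v i, v j⟫ = 0)
    (Z : Matrix (Fin (n + 1)) (Fin (n + 1)) ℝ)
    (hZ : ∀ i j : Fin (n + 1), Z i j =
      (1 / c) * ⟪if i.val = 0 then -v 0 else v i, if j.val = 0 then -v 0 else v j⟫) :
    Z.PosSemidef ∧
    Z 0 0 = (1 + Real.cos (Real.pi / n)) / Real.cos (Real.pi / n) ∧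
    (∀ i : Fin (n + 1), i.val ≠ 0 → Z i i = 1 ∧ Z i i = -(2 * Z 0 i + 1)) ∧
    (∀ i j : Fin (n + 1), i.val ≠ 0 → j.val ≠ 0 → i ≠ j →
      (i.val % n + 1 = j.val ∨ j.val % n + 1 = i.val) → Z i j = 0) := by
  have hπ : (0:ℝ) < Real.pi := Real.pi_pos
  have hn0 : (0:ℝ) < n := by positivity
  have hcos : 0 < Real.cos (Real.pi / n) := by
    apply Real.cos_pos_of_mem_Ioo
    constructor
    · have : (0:ℝ) < Real.pi / n := by positivity
      linarith
    · have h2 : (2:ℝ) < n := by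
        have : (5:ℝ) ≤ n := by exact_mod_cast hn
        linarith
      exact div_lt_div_of_pos_left hπ (by norm_num) h2
  have hc0 : 0 < c := by
    rw [hc]; positivity
  set w : Fin (n + 1) → E := fun i => if i.val = 0 then -v 0 else v i with hw
  have hZ' : ∀ i j, Z i j = (1 / c) * ⟪w i, w j⟫ := hZ
  refine ⟨?_, ?_, ?_, ?_⟩
  · rw [Matrix.posSemidef_iff_dotProduct_mulVec]
    constructor
    · ext i j
      simp only [Matrix.conjTranspose_apply, hZ', star_trivial]
      rw [real_inner_comm]
    · intro x
      have key : dotProduct (star x) (Z.mulVec x) = (1 / c) * ⟪∑ i, x i • w i, ∑ i, x i • w i⟫ := by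
        rw [sum_inner]
        simp only [dotProduct, Matrix.mulVec, star_trivial, Finset.mul_sum,
          inner_sum, real_inner_smul_left, real_inner_smul_right, hZ']
        apply Finset.sum_congr rfl
        intro i _
        apply Finset.sum_congr rfl
        intro j _
        ring
      rw [key]
      have := real_inner_self_nonneg (x := ∑ i, x i • w i)
      positivity
  · rw [hZ']
    have h0 : w 0 = -v 0 := by simp [hw]
    rw [h0, inner_neg_neg, hv0, hc]
    rw [mul_one, one_div, inv_div]
  · intro i hi
    have hwi : w i = v i := by simp only [hw]; rw [if_neg hi]
    have hw0 : w 0 = -v 0 := by simp [hw]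
    have h1 : Z i i = 1 := by
      rw [hZ', hwi, hvii i hi]
      field_simp
    refine ⟨h1, ?_⟩
    have h2 : Z 0 i = -1 := by
      rw [hZ', hw0, hwi, inner_neg_left, hv0i i hi]
      field_simp
    rw [h1, h2]; ring
  · intro i j hi hj _ hadj
    rw [hZ']
    have hwi : w i = v i := by simp only [hw]; rw [if_neg hi]
    have hwj : w j = v j := by simp only [hw]; rw [if_neg hj]
    rw [hwi, hwj, horth i j hi hj hadj, mul_zero]
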